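/- arXiv:2412.11903 — 2 statements merged into one kernel-verified Lean document; each statement's English description precedes it below -/
import Mathlib

section
/- Let ψ = ψ_{s,1} (Bell state with t = 1). Then p_{0,0} = (1/2) sin²((μ + (-1)^s ν)/2) + 2(-1)^{s+1} sin²((η−ζ)/2) · P(μ/2, ν/2), where P(α,β) = cos α cos β sin α sin β. -/
noncomputable def tr (k : Fin 2) (α : ℝ) : ℝ := if k = 0 then Real.cos α else Real.sin α

noncomputable def uvec (μ η : ℝ) (k : Fin 2) : EuclideanSpace ℂ (Fin 2) :=
  (WithLp.equiv 2 (Fin 2 → ℂ)).symm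
    ![((-1 : ℂ)) ^ (k : ℕ) * Complex.exp (-(η : ℂ) * Complex.I) * (tr k (μ / 2) : ℂ),
      (tr (k + 1) (μ / 2) : ℂ)]

noncomputable def ket (i : Fin 2) : EuclideanSpace ℂ (Fin 2) := EuclideanSpace.single i 1

noncomputable def tens (u v : EuclideanSpace ℂ (Fin 2)) : EuclideanSpace ℂ (Fin 2 × Fin 2) :=
  (WithLp.equiv 2 (Fin 2 × Fin 2 → ℂ)).symm fun p => u p.1 * v p.2

noncomputable def bell (s t : Fin 2) : EuclideanSpace ℂ (Fin 2 × Fin 2) :=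
  ((Real.sqrt 2 : ℂ))⁻¹ • (tens (ket 0) (ket t) + ((-1 : ℂ)) ^ (s : ℕ) • tens (ket 1) (ket (t + 1)))

/-- the probability p_{k,ℓ} = |⟨u^{(k)} ⊗ u^{(ℓ)} | ψ_{s,t}⟩|² -/
noncomputable def prob (μ η ν ζ : ℝ) (s t k ℓ : Fin 2) : ℝ :=
  ‖(inner ℂ (tens (uvec μ η k) (uvec ν ζ ℓ)) (bell s t) : ℂ)‖ ^ 2

/-- P(α,β) = cos α cos β sin α sin β -/
noncomputable def P (α β : ℝ) : ℝ := Real.cos α * Real.cos β * Real.sin α * Real.sin β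

theorem stmt11 (μ η ν ζ : ℝ) (s : Fin 2) :
    prob μ η ν ζ s 1 0 0 =
      (1 / 2) * Real.sin ((μ + (-1 : ℝ) ^ (s : ℕ) * ν) / 2) ^ 2 +
        2 * (-1 : ℝ) ^ ((s : ℕ) + 1) * Real.sin ((η - ζ) / 2) ^ 2 * P (μ / 2) (ν / 2) := by
  have hz : (inner ℂ (tens (uvec μ η 0) (uvec ν ζ 0)) (bell s 1) : ℂ) =
      (Real.sqrt 2 : ℂ)⁻¹ *
        (((Real.cos η : ℂ) + (Real.sin η : ℂ) * Complex.I) * (Real.cos (μ/2) : ℂ) * (Real.sin (ν/2) : ℂ)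
          + (-1 : ℂ) ^ (s : ℕ) * ((Real.cos ζ : ℂ) + (Real.sin ζ : ℂ) * Complex.I) * (Real.sin (μ/2) : ℂ) * (Real.cos (ν/2) : ℂ)) := by
    simp only [PiLp.inner_apply, Fintype.sum_prod_type, Fin.sum_univ_two,
      tens, uvec, bell, ket, tr, WithLp.equiv_symm_apply, PiLp.toLp_apply, EuclideanSpace.single_apply,
      Matrix.cons_val_zero, Matrix.cons_val_one, Matrix.head_cons, PiLp.smul_apply,
      PiLp.add_apply, smul_eq_mul,
      show ((1:Fin 2) + 1) = 0 from rfl, show ((0:Fin 2) + 1) = 1 from rfl]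
    rw [show -(η:ℂ) * Complex.I = (starRingEnd ℂ) ((η:ℂ) * Complex.I) by
          simp [Complex.conj_I, Complex.conj_ofReal],
        show -(ζ:ℂ) * Complex.I = (starRingEnd ℂ) ((ζ:ℂ) * Complex.I) by
          simp [Complex.conj_I, Complex.conj_ofReal],
        Complex.exp_conj, Complex.exp_conj]
    simp only [map_mul, map_add, map_one, map_pow, map_neg, RingHomCompTriple.comp_apply,
      Complex.conj_conj, Complex.conj_ofReal, Complex.exp_mul_I, ← Complex.ofReal_cos,
      ← Complex.ofReal_sin, Complex.conj_I, if_true, if_false]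
    norm_num [Fin.ext_iff, ← Complex.ofReal_cos, ← Complex.ofReal_sin]
    ring
  unfold prob
  rw [hz, norm_mul, norm_inv, mul_pow, Complex.sq_norm, Complex.norm_real, Real.norm_eq_abs,
    abs_of_nonneg (Real.sqrt_nonneg 2)]
  have h2 : Real.sqrt 2 ^ 2 = 2 := Real.sq_sqrt (by norm_num)
  have hμ : Real.sin (μ/2) ^ 2 + Real.cos (μ/2) ^ 2 = 1 := Real.sin_sq_add_cos_sq _
  have hν : Real.sin (ν/2) ^ 2 + Real.cos (ν/2) ^ 2 = 1 := Real.sin_sq_add_cos_sq _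
  have hη : Real.sin ((η-ζ)/2) ^ 2 = (1 - Real.cos (η - ζ)) / 2 := by
    have h := Real.cos_two_mul ((η-ζ)/2)
    have hp := Real.sin_sq_add_cos_sq ((η-ζ)/2)
    rw [show 2*((η-ζ)/2) = η - ζ by ring] at h
    linarith
  rw [Real.cos_sub] at hη
  have hη2 : Real.sin η ^ 2 + Real.cos η ^ 2 = 1 := Real.sin_sq_add_cos_sq _
  have hζ2 : Real.sin ζ ^ 2 + Real.cos ζ ^ 2 = 1 := Real.sin_sq_add_cos_sq _
  fin_cases s
  · simp only [Fin.isValue, Fin.val_zero, pow_zero, pow_one, one_mul,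
      Complex.normSq_apply, Complex.add_re, Complex.add_im, Complex.mul_re, Complex.mul_im,
      Complex.ofReal_re, Complex.ofReal_im, Complex.I_re, Complex.I_im, Complex.one_re,
      Complex.one_im, P]
    rw [show (μ + ν)/2 = μ/2 + ν/2 by ring, Real.sin_add, hη,
      show ((Real.sqrt 2)⁻¹:ℝ)^2 = 1/2 by rw [inv_pow, h2]; norm_num]
    linear_combination ((1:ℝ)/2 * Real.cos (μ/2)^2 * Real.sin (ν/2)^2) * hη2 +
      ((1:ℝ)/2 * Real.sin (μ/2)^2 * Real.cos (ν/2)^2) * hζ2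
  · simp only [Fin.isValue, Fin.val_one, pow_one, neg_mul, one_mul,
      Complex.normSq_apply, Complex.add_re, Complex.add_im, Complex.mul_re, Complex.mul_im,
      Complex.ofReal_re, Complex.ofReal_im, Complex.I_re, Complex.I_im, Complex.one_re,
      Complex.one_im, Complex.neg_re, Complex.neg_im, P]
    rw [show ((-1:ℝ))^(1+1) = 1 by norm_num,
      show (μ + -ν)/2 = μ/2 + -(ν/2) by ring, Real.sin_add, Real.sin_neg, Real.cos_neg, hη,
      show ((Real.sqrt 2)⁻¹:ℝ)^2 = 1/2 by rw [inv_pow, h2]; norm_num]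
    linear_combination ((1:ℝ)/2 * Real.cos (μ/2)^2 * Real.sin (ν/2)^2) * hη2 +
      ((1:ℝ)/2 * Real.sin (μ/2)^2 * Real.cos (ν/2)^2) * hζ2
end

section
/- Let μ, ν ∈ [0, π], η = ζ = π/2, and ψ = ψ_{0,t} for some t ∈ {0,1}. Then p_{0,0} = 1/4 if and only if μ + ν = π/2 or μ + ν = 3π/2. -/
lemma hexp_conj : (starRingEnd ℂ) (Complex.exp (-(↑Real.pi / 2 * Complex.I))) = Complex.I := by
  rw [← Complex.exp_conj]
  have h1 : (starRingEnd ℂ) (-((Real.pi:ℂ) / 2 * Complex.I)) = ↑Real.pi / 2 * Complex.I := by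
    simp only [map_neg, map_mul, Complex.conj_I, map_div₀, Complex.conj_ofReal, map_ofNat]
    ring
  rw [h1, Complex.exp_mul_I]
  rw [show ((Real.pi:ℂ))/2 = ((Real.pi/2 : ℝ):ℂ) by push_cast; ring]
  rw [← Complex.ofReal_cos, ← Complex.ofReal_sin, Real.cos_pi_div_two, Real.sin_pi_div_two]
  simp

lemma hconj_cos (x : ℂ) : (starRingEnd ℂ) (Complex.cos x) = Complex.cos ((starRingEnd ℂ) x) :=
  (Complex.cos_conj x).symm

lemma prob0 (μ ν : ℝ) :
    prob μ (Real.pi / 2) ν (Real.pi / 2) 0 0 0 0 = 1/2 * Real.cos ((μ+ν)/2) ^ 2 := by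
  simp only [prob, bell, tens, uvec, ket, tr, PiLp.inner_apply, Fintype.sum_prod_type,
    Fin.sum_univ_two, EuclideanSpace.single_apply]
  simp [hexp_conj, ← Complex.ofReal_cos, ← Complex.ofReal_sin, Complex.conj_ofReal]
  have h : ((Real.sqrt 2 : ℂ))⁻¹ * (Complex.I * ↑(Real.cos (μ/2)) * (Complex.I * ↑(Real.cos (ν/2))))
      + ((Real.sqrt 2 : ℂ))⁻¹ * (↑(Real.sin (μ/2)) * ↑(Real.sin (ν/2)))
      = (((Real.sin (μ/2) * Real.sin (ν/2) - Real.cos (μ/2) * Real.cos (ν/2)) / Real.sqrt 2 : ℝ) : ℂ) := by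
    push_cast
    linear_combination (Complex.cos ((μ:ℂ)/2) * Complex.cos ((ν:ℂ)/2) * ((Real.sqrt 2 : ℂ))⁻¹) * Complex.I_mul_I
  rw [h, Complex.norm_real, Real.norm_eq_abs, sq_abs]
  have hc : Real.cos ((μ+ν)/2) = Real.cos (μ/2) * Real.cos (ν/2) - Real.sin (μ/2) * Real.sin (ν/2) := by
    rw [show (μ+ν)/2 = μ/2 + ν/2 by ring, Real.cos_add]
  rw [hc, div_pow, Real.sq_sqrt (by norm_num : (0:ℝ) ≤ 2)]
  ring

lemma prob1 (μ ν : ℝ) :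
    prob μ (Real.pi / 2) ν (Real.pi / 2) 0 1 0 0 = 1/2 * Real.sin ((μ+ν)/2) ^ 2 := by
  simp only [prob, bell, tens, uvec, ket, tr, PiLp.inner_apply, Fintype.sum_prod_type,
    Fin.sum_univ_two, EuclideanSpace.single_apply]
  simp [hexp_conj, ← Complex.ofReal_cos, ← Complex.ofReal_sin, Complex.conj_ofReal]
  have h : ((Real.sqrt 2 : ℂ))⁻¹ * (Complex.I * ↑(Real.cos (μ/2)) * ↑(Real.sin (ν/2)))
      + ((Real.sqrt 2 : ℂ))⁻¹ * (↑(Real.sin (μ/2)) * (Complex.I * ↑(Real.cos (ν/2))))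
      = (((Real.cos (μ/2) * Real.sin (ν/2) + Real.sin (μ/2) * Real.cos (ν/2)) / Real.sqrt 2 : ℝ) : ℂ) * Complex.I := by
    push_cast
    ring
  rw [h, norm_mul, Complex.norm_I, mul_one, Complex.norm_real, Real.norm_eq_abs, sq_abs]
  have hc : Real.sin ((μ+ν)/2) = Real.sin (μ/2) * Real.cos (ν/2) + Real.cos (μ/2) * Real.sin (ν/2) := by
    rw [show (μ+ν)/2 = μ/2 + ν/2 by ring, Real.sin_add]
  rw [hc, div_pow, Real.sq_sqrt (by norm_num : (0:ℝ) ≤ 2)]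
  ring

lemma cos_zero_iff' {x : ℝ} (h0 : 0 ≤ x) (h2 : x ≤ 2 * Real.pi) :
    Real.cos x = 0 ↔ x = Real.pi / 2 ∨ x = 3 * Real.pi / 2 := by
  rw [Real.cos_eq_zero_iff]
  constructor
  · rintro ⟨k, hk⟩
    have hπ := Real.pi_pos
    have hk0 : (0:ℤ) ≤ k := by
      by_contra hlt
      push_neg at hlt
      have hk' : k ≤ -1 := by omega
      have : (k:ℝ) ≤ -1 := by exact_mod_cast hk' 
      nlinarith [hk, h0]
    have hk1 : k ≤ 1 := by
      by_contra hlt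
      push_neg at hlt
      have : (2:ℝ) ≤ (k:ℝ) := by exact_mod_cast hlt
      nlinarith [hk, h2]
    interval_cases k
    · left; rw [hk]; push_cast; ring
    · right; rw [hk]; push_cast; ring
  · rintro (h | h)
    · exact ⟨0, by rw [h]; push_cast; ring⟩
    · exact ⟨1, by rw [h]; push_cast; ring⟩

lemma sq_half_iff_cos {θ : ℝ} : Real.cos θ ^ 2 = 1/2 ↔ Real.cos (2 * θ) = 0 := by
  rw [Real.cos_two_mul]; constructor <;> intro h <;> nlinarith

lemma sin_sq_half_iff_cos {θ : ℝ} : Real.sin θ ^ 2 = 1/2 ↔ Real.cos (2 * θ) = 0 := by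
  rw [Real.cos_two_mul]
  have := Real.sin_sq_add_cos_sq θ
  constructor <;> intro h <;> nlinarith

theorem stmt17 (μ ν : ℝ) (hμ : μ ∈ Set.Icc 0 Real.pi) (hν : ν ∈ Set.Icc 0 Real.pi) (t : Fin 2) :
    prob μ (Real.pi / 2) ν (Real.pi / 2) 0 t 0 0 = 1 / 4 ↔
      μ + ν = Real.pi / 2 ∨ μ + ν = 3 * Real.pi / 2 := by
  obtain ⟨hμ0, hμ1⟩ := hμ
  obtain ⟨hν0, hν1⟩ := hν
  have hcz : Real.cos (μ + ν) = 0 ↔ μ + ν = Real.pi / 2 ∨ μ + ν = 3 * Real.pi / 2 :=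
    cos_zero_iff' (by linarith) (by linarith)
  have h2 : 2 * ((μ + ν) / 2) = μ + ν := by ring
  fin_cases t <;> simp only [Fin.mk_one, Fin.mk_zero, Fin.isValue]
  · rw [prob0]
    have hh := @sq_half_iff_cos ((μ + ν) / 2)
    rw [h2] at hh
    rw [← hcz, ← hh]
    constructor <;> intro h <;> linarith
  · rw [prob1]
    have hh := @sin_sq_half_iff_cos ((μ + ν) / 2)
    rw [h2] at hh
    rw [← hcz, ← hh]
    constructor <;> intro h <;> linarith
end
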